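/- Let d ≥ 2 and let Λ₁ ⊆ Λ₂ be two σ_d-invariant q-laminations with associated equivalence relations ∼₁, ∼₂, such that every ∼₁-class is contained in a ∼₂-class (Λ₂ tunes Λ₁). If ℓ is a leaf of Λ₂ that is not a leaf of Λ₁ and is not a limit of leaves of Λ₁, then ℓ is contained in (the closure of) an infinite gap of Λ₁, where a gap is the closure of a component of the open disk minus the union of all leaves of Λ₁, and a gap is infinite if its intersection with the circle is infinite. -/

import Mathlib

noncomputable section

/-- The circle `ℝ/ℤ`. -/
abbrev S1 := AddCircle (1 : ℝ)

/-- The `d`-tupling map `σ_d(t) = d·t` on the circle. -/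
def sig (d : ℕ) (x : S1) : S1 := d • x

/-- `StrictArc a b c` : `b` lies strictly inside the positively oriented open arc from `a` to `c`. -/
def StrictArc (a b c : S1) : Prop :=
  ∃ x y z : ℝ, (x : S1) = a ∧ (y : S1) = b ∧ (z : S1) = c ∧ x < y ∧ y < z ∧ z < x + 1

/-- Two chords (given by ordered pairs of endpoints) are linked (cross): their endpoints
alternate on the circle. -/
def Linked (p q : S1 × S1) : Prop :=
  (StrictArc p.1 q.1 p.2 ∧ StrictArc p.2 q.2 p.1) ∨ (StrictArc p.1 q.2 p.2 ∧ StrictArc p.2 q.1 p.1)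

/-- Two chords are disjoint: they share no endpoint and are not linked. -/
def ChordDisj (p q : S1 × S1) : Prop :=
  p.1 ≠ q.1 ∧ p.1 ≠ q.2 ∧ p.2 ≠ q.1 ∧ p.2 ≠ q.2 ∧ ¬ Linked p q

/-- The σ_d-image of a chord, as the (unordered) set of images of the endpoints. -/
def chordIm (d : ℕ) (p : S1 × S1) : Set S1 := {sig d p.1, sig d p.2}
def circleMap1 : ℝ → ℂ := fun x => Complex.exp (2 * Real.pi * Complex.I * (x : ℂ))

theorem circleMap1_periodic : Function.Periodic circleMap1 1 := by
  intro x
  unfold circleMap1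
  push_cast
  rw [mul_add, Complex.exp_add, mul_one, Complex.exp_two_pi_mul_I, mul_one]

/-- The standard embedding of the circle `ℝ/ℤ` into the plane (unit circle in `ℂ`). -/
def toC : S1 → ℂ := circleMap1_periodic.lift

/-- The chord with endpoints `p.1, p.2`, realized as a straight segment in the closed disk. -/
def chordSeg (p : S1 × S1) : Set ℂ := segment ℝ (toC p.1) (toC p.2)
/-- A σ_d-invariant laminational equivalence relation on the circle. -/
structure LamEq (d : ℕ) where
  /-- the relation -/
  r : S1 → S1 → Prop
  refl : ∀ x, r x x
  symm : ∀ {x y}, r x y → r y x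
  trans : ∀ {x y z}, r x y → r y z → r x z
  /-- (E1) the graph of the relation is closed -/
  closed : IsClosed {p : S1 × S1 | r p.1 p.2}
  /-- (E3) all classes are finite -/
  finite : ∀ x, {y | r x y}.Finite
  /-- (E2) convex hulls of distinct classes are unlinked (hence disjoint) -/
  unlinked : ∀ x y z w, r x y → r z w → ¬ r x z → ¬ Linked (x, y) (z, w)
  /-- (D1) the image of a class is a class -/
  forward : ∀ x, sig d '' {y | r x y} = {z | r (sig d x) z}
  /-- (D3) on classes with more than two points, σ_d is a positively oriented covering map
  onto the image class: every hole of a class maps to a degenerate arc or to a hole of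
  the image class. -/
  posOriented : ∀ x, 2 < Set.ncard {y | r x y} →
    ∀ s t, r x s → r x t → s ≠ t → (∀ z, r x z → ¬ StrictArc s z t) →
      sig d s = sig d t ∨ ∀ w, r (sig d x) w → ¬ StrictArc (sig d s) w (sig d t)

/-- `{x, y}` is an edge of the convex hull of the class of `x`: both endpoints lie in one
class and one of the two open arcs determined by them contains no point of the class. -/
def LamEq.IsEdge {d : ℕ} (E : LamEq d) (x y : S1) : Prop :=
  E.r x y ∧ x ≠ y ∧
    ((∀ z, E.r x z → ¬ StrictArc x z y) ∨ (∀ z, E.r x z → ¬ StrictArc y z x))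

/-- The union of all (non-degenerate) leaves of the q-lamination of `E`, realized as
straight segments in the closed unit disk. -/
def leafUnion {d : ℕ} (E : LamEq d) : Set ℂ :=
  ⋃ p ∈ {p : S1 × S1 | E.IsEdge p.1 p.2}, chordSeg p
namespace Lam19
open Complex Set Real

noncomputable def ee (t : ℝ) : ℂ := Complex.exp (2*Real.pi*Complex.I*t)

lemma toC_coe (t : ℝ) : toC (t : S1) = ee t := circleMap1_periodic.lift_coe t

lemma s1_coe_eq_iff {a b : ℝ} : ((a : S1) = (b : S1)) ↔ ∃ n : ℤ, a - b = n := by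
  rw [show ((a : S1) = (b : S1)) ↔ a - b ∈ AddSubgroup.zmultiples (1:ℝ) from QuotientAddGroup.eq_iff_sub_mem]
  constructor
  · rintro h
    rcases AddSubgroup.mem_zmultiples_iff.1 h with ⟨n, hn⟩
    exact ⟨n, by simpa using hn.symm⟩
  · rintro ⟨n, hn⟩
    exact AddSubgroup.mem_zmultiples_iff.2 ⟨n, by simpa using hn.symm⟩

lemma coe_add_int (r : ℝ) (n : ℤ) : ((r + n : ℝ) : S1) = (r : S1) :=
  s1_coe_eq_iff.2 ⟨n, by ring⟩

lemma coe_add_one (r : ℝ) : ((r + 1 : ℝ) : S1) = (r : S1) := by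
  simpa using coe_add_int r 1

lemma ee_inj {s t : ℝ} (h : ee s = ee t) : ∃ n : ℤ, s - t = n := by
  rcases Complex.exp_eq_exp_iff_exists_int.1 h with ⟨n, hn⟩
  refine ⟨n, ?_⟩
  have h2 : (2*Real.pi*Complex.I) * (s - t - n) = 0 := by
    push_cast
    linear_combination hn
  have hI : (2*Real.pi*Complex.I) ≠ 0 := by
    simp [Complex.I_ne_zero, Real.pi_ne_zero]
  have h3 : ((s - t - n : ℝ) : ℂ) = 0 := by
    have := mul_eq_zero.1 h2
    push_cast
    rcases this with h | h
    · exact absurd h hI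
    · push_cast at h; linear_combination h
  have := Complex.ofReal_eq_zero.1 h3
  linarith [this]

lemma toC_inj : Function.Injective toC := by
  intro a b h
  induction a using QuotientAddGroup.induction_on with
  | H s =>
  induction b using QuotientAddGroup.induction_on with
  | H t =>
  rw [show ((s : ℝ) : S1) = ((s:ℝ) : AddCircle (1:ℝ)) from rfl] at *
  rw [toC_coe, toC_coe] at h
  exact s1_coe_eq_iff.2 (ee_inj h)

lemma abs_ee (t : ℝ) : ‖ee t‖ = 1 := by
  rw [ee, Complex.norm_exp]
  have : (2*Real.pi*Complex.I*(t:ℂ)).re = 0 := by simp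
  rw [this, Real.exp_zero]

lemma abs_toC (x : S1) : ‖toC x‖ = 1 := by
  induction x using QuotientAddGroup.induction_on with
  | H s => rw [show (((s:ℝ)) : AddCircle (1:ℝ)) = ((s : ℝ) : S1) from rfl, toC_coe]; exact abs_ee s

lemma toC_mem_closedBall (x : S1) : toC x ∈ Metric.closedBall (0:ℂ) 1 := by
  simp [Metric.mem_closedBall, Complex.dist_eq, abs_toC]

lemma exists_rep (t₁ : ℝ) (c : S1) : ∃ s : ℝ, (s : S1) = c ∧ t₁ ≤ s ∧ s < t₁ + 1 := by
  induction c using QuotientAddGroup.induction_on with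
  | H r =>
  refine ⟨toIcoMod one_pos t₁ r, ?_, (toIcoMod_mem_Ico one_pos t₁ r).1,
    by simpa using (toIcoMod_mem_Ico one_pos t₁ r).2⟩
  apply s1_coe_eq_iff.2
  refine ⟨-(toIcoDiv one_pos t₁ r), ?_⟩
  have := toIcoMod_sub_self one_pos t₁ r
  push_cast
  simpa using this

lemma int_eq_zero_of_abs_lt {m : ℤ} (h1 : (m:ℝ) < 1) (h2 : (-1:ℝ) < m) : m = 0 := by
  have a1 : m < 1 := by exact_mod_cast h1
  have a2 : (-1 : ℤ) < m := by exact_mod_cast h2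
  omega

lemma strictArc_of {x y z : ℝ} (h1 : x < y) (h2 : y < z) (h3 : z < x+1) :
    StrictArc (x : S1) (y : S1) (z : S1) :=
  ⟨x, y, z, rfl, rfl, rfl, h1, h2, h3⟩

lemma strictArc_dest {x z : ℝ} (c : S1) (h : StrictArc (x : S1) c (z : S1))
    (hxz : x < z) (hz : z < x + 1) : ∃ s : ℝ, (s : S1) = c ∧ x < s ∧ s < z := by
  obtain ⟨a, b, c', ha, hb, hc, hab, hbc, hca⟩ := h
  rcases s1_coe_eq_iff.1 ha with ⟨n, hn⟩
  -- a = x + n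
  have han : a = x + n := by linarith [hn]
  refine ⟨b - n, ?_, ?_, ?_⟩
  · rw [show (b : ℝ) - n = b + (-n : ℤ) by push_cast; ring, coe_add_int, hb]
  · linarith
  · -- c' - n ≡ z and both in (x, x+1) ⇒ equal
    have hc1 : ((c' - n : ℝ) : S1) = (z : S1) := by
      rw [show (c' : ℝ) - n = c' + (-n : ℤ) by push_cast; ring, coe_add_int, hc]
    rcases s1_coe_eq_iff.1 hc1 with ⟨m, hm⟩
    have hm0 : m = 0 := by
      apply int_eq_zero_of_abs_lt
      · have : c' - n < x + 1 := by linarith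
        linarith [hm, hxz]
      · have : x < c' - n := by linarith
        linarith [hm, hz]
    have : c' - n = z := by rw [hm0] at hm; push_cast at hm; linarith
    linarith

end Lam19
namespace Lam19
open Complex Set Real

/-- signed side of the chord from `a` to `b`. -/
noncomputable def sideFun (a b p : ℂ) : ℝ := ((p - a) * (starRingEnd ℂ) (b - a)).im

lemma trig_identity (A B : ℝ) :
    Real.sin (2*(A-B)) - Real.sin (2*A) + Real.sin (2*B)
      = 4 * Real.sin A * Real.sin B * Real.sin (A-B) := by
  rw [Real.sin_two_mul, Real.sin_two_mul, Real.sin_two_mul, Real.sin_sub, Real.cos_sub]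
  linear_combination (2*Real.sin A*Real.cos A) * Real.sin_sq_add_cos_sq B
    + (-2*Real.sin B*Real.cos B) * Real.sin_sq_add_cos_sq A

lemma im_ee_mul_conj (a b : ℝ) : (ee a * (starRingEnd ℂ) (ee b)).im = Real.sin (2*Real.pi*(a-b)) := by
  rw [ee, ee, ← Complex.exp_conj]
  rw [← Complex.exp_add]
  have h1 : (starRingEnd ℂ) (2*Real.pi*Complex.I*(b:ℂ)) = -(2*Real.pi*Complex.I*(b:ℂ)) := by
    apply Complex.ext <;> simp
  rw [h1]
  have h2 : 2*Real.pi*Complex.I*(a:ℂ) + -(2*Real.pi*Complex.I*(b:ℂ))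
      = ((2*Real.pi*(a-b) : ℝ) : ℂ) * Complex.I := by push_cast; ring
  rw [h2, Complex.exp_ofReal_mul_I_im]

lemma side_ee (x y t : ℝ) :
    sideFun (ee x) (ee y) (ee t)
      = 4 * Real.sin (Real.pi*(t-x)) * Real.sin (Real.pi*(y-x)) * Real.sin (Real.pi*(t-y)) := by
  rw [sideFun]
  have expand : (ee t - ee x) * (starRingEnd ℂ) (ee y - ee x)
      = ee t * (starRingEnd ℂ) (ee y) - ee t * (starRingEnd ℂ) (ee x)
        - ee x * (starRingEnd ℂ) (ee y) + ee x * (starRingEnd ℂ) (ee x) := by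
    rw [map_sub]; ring
  rw [expand]
  have him : ∀ z w : ℂ, (z - w).im = z.im - w.im := fun z w => Complex.sub_im z w
  rw [Complex.add_im, Complex.sub_im, Complex.sub_im,
    im_ee_mul_conj, im_ee_mul_conj, im_ee_mul_conj, im_ee_mul_conj]
  have h0 : Real.sin (2*Real.pi*(x-x)) = 0 := by simp
  rw [h0]
  have key := trig_identity (Real.pi*(t-x)) (Real.pi*(y-x))
  have e1 : 2*(Real.pi*(t-x) - Real.pi*(y-x)) = 2*Real.pi*(t-y) := by ring
  have e2 : 2*(Real.pi*(t-x)) = 2*Real.pi*(t-x) := by ring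
  have e3 : Real.pi*(t-x) - Real.pi*(y-x) = Real.pi*(t-y) := by ring
  rw [e1, e3] at key
  have e4 : Real.sin (2*Real.pi*(x-y)) = - Real.sin (2*Real.pi*(y-x)) := by
    rw [show 2*Real.pi*(x-y) = -(2*Real.pi*(y-x)) by ring, Real.sin_neg]
  rw [e4]
  rw [show 2*(Real.pi*(t-x)) = 2*Real.pi*(t-x) by ring] at key
  rw [show 2*(Real.pi*(y-x)) = 2*Real.pi*(y-x) by ring] at key
  linarith [key]

lemma side_affine (a b p q : ℂ) {s t : ℝ} (h : s + t = 1) :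
    sideFun a b (s•p + t•q) = s * sideFun a b p + t * sideFun a b q := by
  have hc : (s:ℂ) + (t:ℂ) = 1 := by exact_mod_cast congrArg (fun r : ℝ => (r:ℂ)) h
  have h1 : s•p + t•q - a = (s:ℂ)*(p-a) + (t:ℂ)*(q-a) := by
    rw [Complex.real_smul, Complex.real_smul]
    linear_combination a * hc
  rw [sideFun, h1, add_mul, Complex.add_im]
  rw [mul_assoc, mul_assoc, Complex.im_ofReal_mul, Complex.im_ofReal_mul]
  rfl

lemma mem_segment_side {a b c d : ℂ} {p : ℂ} (hp : p ∈ segment ℝ c d) :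
    ∃ s t : ℝ, 0 ≤ s ∧ 0 ≤ t ∧ s + t = 1 ∧
      sideFun a b p = s * sideFun a b c + t * sideFun a b d := by
  obtain ⟨s, t, hs, ht, hst, rfl⟩ := hp
  exact ⟨s, t, hs, ht, hst, side_affine a b c d hst⟩

lemma side_pos_on_segment {a b c d : ℂ} (hc : 0 < sideFun a b c) (hd : 0 < sideFun a b d)
    {p : ℂ} (hp : p ∈ segment ℝ c d) : 0 < sideFun a b p := by
  obtain ⟨s, t, hs, ht, hst, heq⟩ := mem_segment_side (a := a) (b := b) hp
  rw [heq]
  rcases eq_or_lt_of_le hs with h | h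
  · have : t = 1 := by linarith
    rw [← h, this]; simpa using hd
  · nlinarith

lemma side_neg_on_segment {a b c d : ℂ} (hc : sideFun a b c < 0) (hd : sideFun a b d < 0)
    {p : ℂ} (hp : p ∈ segment ℝ c d) : sideFun a b p < 0 := by
  obtain ⟨s, t, hs, ht, hst, heq⟩ := mem_segment_side (a := a) (b := b) hp
  rw [heq]
  rcases eq_or_lt_of_le hs with h | h
  · have : t = 1 := by linarith
    rw [← h, this]; simpa using hd
  · nlinarith

lemma side_zero_on_segment {a b c d : ℂ} (hc : sideFun a b c = 0) (hd : sideFun a b d = 0)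
    {p : ℂ} (hp : p ∈ segment ℝ c d) : sideFun a b p = 0 := by
  obtain ⟨s, t, hs, ht, hst, heq⟩ := mem_segment_side (a := a) (b := b) hp
  rw [heq, hc, hd]; ring

/-- if `f c = 0 < f d`, the only zero of `f` on `[c,d]` is `c`. -/
lemma side_zero_endpoint {a b c d : ℂ} (hc : sideFun a b c = 0) (hd : sideFun a b d ≠ 0)
    {p : ℂ} (hp : p ∈ segment ℝ c d) (hzero : sideFun a b p = 0) : p = c := by
  obtain ⟨s, t, hs, ht, hst, rfl⟩ := hp
  rw [side_affine a b c d hst, hc, mul_zero, zero_add] at hzero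
  have ht0 : t = 0 := by
    rcases mul_eq_zero.1 hzero with h | h
    · exact h
    · exact absurd h hd
  rw [ht0] at hst ⊢
  have hs1 : s = 1 := by linarith
  simp [hs1]

end Lam19
namespace Lam19
open Complex Set Real

lemma sinpi_pos {s : ℝ} (h1 : 0 < s) (h2 : s < 1) : 0 < Real.sin (Real.pi * s) :=
  Real.sin_pos_of_pos_of_lt_pi (by positivity) (by nlinarith [Real.pi_pos])

lemma sinpi_neg {s : ℝ} (h1 : -1 < s) (h2 : s < 0) : Real.sin (Real.pi * s) < 0 := by
  have : Real.sin (Real.pi * s) = - Real.sin (Real.pi * (-s)) := by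
    rw [show Real.pi * s = -(Real.pi * (-s)) by ring, Real.sin_neg]
  rw [this]
  have := sinpi_pos (by linarith : (0:ℝ) < -s) (by linarith)
  linarith

lemma side_ee_pos {x y t : ℝ} (hxy : x < y) (hty : y < t) (ht2 : t < x + 1) :
    0 < sideFun (ee x) (ee y) (ee t) := by
  rw [side_ee]
  have s1 : 0 < Real.sin (Real.pi * (t - x)) := sinpi_pos (by linarith) (by linarith)
  have s2 : 0 < Real.sin (Real.pi * (y - x)) := sinpi_pos (by linarith) (by linarith)
  have s3 : 0 < Real.sin (Real.pi * (t - y)) := sinpi_pos (by linarith) (by linarith)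
  positivity

lemma side_ee_neg {x y t : ℝ} (hxt : x < t) (hty : t < y) (hyx : y < x + 1) :
    sideFun (ee x) (ee y) (ee t) < 0 := by
  rw [side_ee]
  have s1 : 0 < Real.sin (Real.pi * (t - x)) := sinpi_pos (by linarith) (by linarith)
  have s2 : 0 < Real.sin (Real.pi * (y - x)) := sinpi_pos (by linarith) (by linarith)
  have s3 : Real.sin (Real.pi * (t - y)) < 0 := sinpi_neg (by linarith) (by linarith)
  have h12 : 0 < Real.sin (Real.pi * (t - x)) * Real.sin (Real.pi * (y - x)) := mul_pos s1 s2
  nlinarith [mul_pos h12 (neg_pos.2 s3)]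

lemma side_self_left (a b : ℂ) : sideFun a b a = 0 := by simp [sideFun]

lemma side_self_right (a b : ℂ) : sideFun a b b = 0 := by
  rw [sideFun, Complex.mul_conj]
  simp

lemma isEdge_symm {d : ℕ} {E : LamEq d} {x y : S1} (h : E.IsEdge x y) : E.IsEdge y x := by
  obtain ⟨hr, hne, hd⟩ := h
  refine ⟨E.symm hr, hne.symm, ?_⟩
  rcases hd with h1 | h2
  · exact Or.inr (fun z hz => h1 z (E.trans hr hz))
  · exact Or.inl (fun z hz => h2 z (E.trans hr hz))

lemma edges_unlinked {d : ℕ} {E : LamEq d}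
    {a b : S1} (he : E.IsEdge a b)
    {c e : S1} (hf : E.IsEdge c e) : ¬ Linked (a, b) (c, e) := by
  intro hL
  by_cases hrel : E.r a c
  · have hrae : E.r a e := E.trans hrel hf.1
    rcases hL with ⟨h1, h2⟩ | ⟨h1, h2⟩
    · rcases he.2.2 with hs | hs
      · exact hs c hrel h1
      · exact hs e hrae h2
    · rcases he.2.2 with hs | hs
      · exact hs e hrae h1
      · exact hs c hrel h2
  · exact E.unlinked a b c e he.1 hf.1 hrel hL

lemma linked_of_interleaved {α β γ δ : ℝ} (o1 : α < γ) (o2 : γ < β) (o3 : β < δ)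
    (o4 : δ < α + 1) : Linked ((α : S1), (β : S1)) ((γ : S1), (δ : S1)) := by
  left
  constructor
  · exact strictArc_of o1 o2 (by linarith)
  · have h : ((α + 1 : ℝ) : S1) = (α : S1) := coe_add_one α
    rw [show ((α : ℝ) : S1) = ((α+1:ℝ) : S1) from h.symm]
    exact strictArc_of o3 o4 (by linarith)

/-- two edges realized as chords with interleaved representatives: impossible. -/
lemma not_interleaved {d : ℕ} {E : LamEq d}
    {α β γ δ : ℝ} (he1 : E.IsEdge (α : S1) (β : S1)) (he2 : E.IsEdge (γ : S1) (δ : S1))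
    (o1 : α < γ) (o2 : γ < β) (o3 : β < δ) (o4 : δ < α + 1) : False :=
  edges_unlinked he1 he2 (linked_of_interleaved o1 o2 o3 o4)

end Lam19
namespace Lam19
open Complex Set Real Filter

lemma freeSet_infinite {d : ℕ} {E1 E2 : LamEq d} (htune : ∀ x y, E1.r x y → E2.r x y)
    {p₁ p₂ : S1} (hne : p₁ ≠ p₂)
    (hside : ∀ z, E2.r p₁ z → ¬ StrictArc p₁ z p₂)
    (hnot1 : ¬ E1.IsEdge p₁ p₂)
    {t₁ t₂ : ℝ} (ht1 : (t₁ : S1) = p₁) (ht2 : (t₂ : S1) = p₂)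
    (hlt : t₁ < t₂) (hub : t₂ < t₁ + 1) :
    {s : ℝ | s ∈ Icc t₁ t₂ ∧ ∀ α β : ℝ, t₁ < α → α < β → β < t₂ →
      E1.IsEdge (α : S1) (β : S1) → ¬(α < s ∧ s < β)}.Infinite := by
  set U : Set ℝ := {s : ℝ | s ∈ Icc t₁ t₂ ∧ ∀ α β : ℝ, t₁ < α → α < β → β < t₂ →
      E1.IsEdge (α : S1) (β : S1) → ¬(α < s ∧ s < β)} with hUdef
  by_contra hUinf
  rw [Set.not_infinite] at hUinf
  have ht1U : t₁ ∈ U := by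
    refine ⟨⟨le_refl _, le_of_lt hlt⟩, ?_⟩
    rintro α β hα hαβ hβ he ⟨h1, h2⟩
    linarith
  have ht2U : t₂ ∈ U := by
    refine ⟨⟨le_of_lt hlt, le_refl _⟩, ?_⟩
    rintro α β hα hαβ hβ he ⟨h1, h2⟩
    linarith
  -- the key step: consecutive free points are E1-related
  have hstep : ∀ u u', u ∈ U → u' ∈ U → u < u' → (∀ s, u < s → s < u' → s ∉ U) →
      E1.r (u : S1) (u' : S1) := by
    intro u u' hu hu' huu hgap
    set x := (u + u')/2 with hxdef
    have hux : u < x := by rw [hxdef]; linarith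
    have hxu : x < u' := by rw [hxdef]; linarith
    have hxU : x ∉ U := hgap x hux hxu
    have hxIcc : x ∈ Icc t₁ t₂ := ⟨le_trans hu.1.1 (le_of_lt hux), le_trans (le_of_lt hxu) hu'.1.2⟩
    set C : Set (ℝ × ℝ) := {p | t₁ < p.1 ∧ p.1 < p.2 ∧ p.2 < t₂ ∧
      E1.IsEdge (p.1 : S1) (p.2 : S1) ∧ p.1 < x ∧ x < p.2} with hCdef
    have hCne : C.Nonempty := by
      by_contra hc
      apply hxU
      refine ⟨hxIcc, ?_⟩
      intro α β h1 h2 h3 h4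
      intro h5
      exact hc ⟨(α, β), h1, h2, h3, h4, h5.1, h5.2⟩
    have hCl : ∀ p ∈ C, u ≤ p.1 := by
      intro p hp
      by_contra hlt'
      push_neg at hlt'
      exact (hu.2 p.1 p.2 hp.1 hp.2.1 hp.2.2.1 hp.2.2.2.1) ⟨hlt', lt_trans hux hp.2.2.2.2.2⟩
    have hCu : ∀ p ∈ C, p.2 ≤ u' := by
      intro p hp
      by_contra hlt'
      push_neg at hlt'
      exact (hu'.2 p.1 p.2 hp.1 hp.2.1 hp.2.2.1 hp.2.2.2.1) ⟨lt_trans hp.2.2.2.2.1 hxu, hlt'⟩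
    have hchain : ∀ p ∈ C, ∀ q ∈ C, (q.1 ≤ p.1 ∧ p.2 ≤ q.2) ∨ (p.1 ≤ q.1 ∧ q.2 ≤ p.2) := by
      intro p hp q hq
      rcases lt_trichotomy p.1 q.1 with h | h | h
      · right
        refine ⟨le_of_lt h, ?_⟩
        by_contra hgt
        push_neg at hgt
        exact not_interleaved hp.2.2.2.1 hq.2.2.2.1 h
          (lt_trans hq.2.2.2.2.1 hp.2.2.2.2.2) hgt (by linarith [hp.1, hq.2.2.1])
      · rcases le_total p.2 q.2 with h2 | h2
        · exact Or.inl ⟨le_of_eq h.symm, h2⟩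
        · exact Or.inr ⟨le_of_eq h, h2⟩
      · left
        refine ⟨le_of_lt h, ?_⟩
        by_contra hgt
        push_neg at hgt
        exact not_interleaved hq.2.2.2.1 hp.2.2.2.1 h
          (lt_trans hp.2.2.2.2.1 hq.2.2.2.2.2) hgt (by linarith [hq.1, hp.2.2.1])
    obtain ⟨p0, hp0⟩ := hCne
    -- infimum of left endpoints
    set A := Prod.fst '' C with hAdef
    have hAne : A.Nonempty := ⟨p0.1, p0, hp0, rfl⟩
    have hAbdd : BddBelow A := ⟨u, by rintro r ⟨p, hp, rfl⟩; exact hCl p hp⟩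
    set a0 := sInf A with ha0def
    have ha0le : ∀ p ∈ C, a0 ≤ p.1 := fun p hp => csInf_le hAbdd ⟨p, hp, rfl⟩
    have ha0u : u ≤ a0 := le_csInf hAne (by rintro r ⟨p, hp, rfl⟩; exact hCl p hp)
    have ha0x : a0 < x := lt_of_le_of_lt (ha0le p0 hp0) hp0.2.2.2.2.1
    have hexlt : ∀ w, a0 < w → ∃ p ∈ C, p.1 < w := by
      intro w hw
      rw [ha0def, csInf_lt_iff hAbdd hAne] at hw
      obtain ⟨r, ⟨p, hp, rfl⟩, hr⟩ := hw
      exact ⟨p, hp, hr⟩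
    have ha0free : ∀ α β : ℝ, t₁ < α → α < β → β < t₂ →
        E1.IsEdge (α : S1) (β : S1) → ¬(α < a0 ∧ a0 < β) := by
      rintro γ δ h1 h2 h3 he ⟨hγ, hδ⟩
      obtain ⟨p, hp, hpδ⟩ := hexlt δ hδ
      have hγp : γ < p.1 := lt_of_lt_of_le hγ (ha0le p hp)
      have hp2δ : p.2 ≤ δ := by
        by_contra hgt
        push_neg at hgt
        exact not_interleaved he hp.2.2.2.1 hγp hpδ hgt (by linarith [hp.2.2.1])
      have hmem : (γ, δ) ∈ C :=
        ⟨h1, h2, h3, he, by dsimp only; linarith, by dsimp only; linarith [hp.2.2.2.2.2]⟩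
      have := ha0le _ hmem
      dsimp only at this
      linarith
    have ha0U : a0 ∈ U := ⟨⟨le_trans hu.1.1 ha0u, le_trans (le_of_lt ha0x) hxIcc.2⟩, ha0free⟩
    have ha0eq : a0 = u := by
      rcases eq_or_lt_of_le ha0u with h | h
      · exact h.symm
      · exact absurd ha0U (hgap a0 h (lt_trans ha0x hxu))
    -- supremum of right endpoints
    set B := Prod.snd '' C with hBdef
    have hBne : B.Nonempty := ⟨p0.2, p0, hp0, rfl⟩
    have hBbdd : BddAbove B := ⟨u', by rintro r ⟨p, hp, rfl⟩; exact hCu p hp⟩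
    set b0 := sSup B with hb0def
    have hb0ge : ∀ p ∈ C, p.2 ≤ b0 := fun p hp => le_csSup hBbdd ⟨p, hp, rfl⟩
    have hb0u : b0 ≤ u' := csSup_le hBne (by rintro r ⟨p, hp, rfl⟩; exact hCu p hp)
    have hb0x : x < b0 := lt_of_lt_of_le hp0.2.2.2.2.2 (hb0ge p0 hp0)
    have hexgt : ∀ w, w < b0 → ∃ p ∈ C, w < p.2 := by
      intro w hw
      rw [hb0def, lt_csSup_iff hBbdd hBne] at hw
      obtain ⟨r, ⟨p, hp, rfl⟩, hr⟩ := hw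
      exact ⟨p, hp, hr⟩
    have hb0free : ∀ α β : ℝ, t₁ < α → α < β → β < t₂ →
        E1.IsEdge (α : S1) (β : S1) → ¬(α < b0 ∧ b0 < β) := by
      rintro γ δ h1 h2 h3 he ⟨hγ, hδ⟩
      obtain ⟨p, hp, hpγ⟩ := hexgt γ hγ
      have hpδ : p.2 < δ := lt_of_le_of_lt (hb0ge p hp) hδ
      have hγp1 : γ ≤ p.1 := by
        by_contra hgt
        push_neg at hgt
        exact not_interleaved hp.2.2.2.1 he hgt hpγ hpδ (by linarith [hp.1])
      have hmem : (γ, δ) ∈ C :=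
        ⟨h1, h2, h3, he, by dsimp only; linarith [hp.2.2.2.2.1], by dsimp only; linarith [hp.2.2.2.2.2]⟩
      have := hb0ge _ hmem
      dsimp only at this
      linarith
    have hb0U : b0 ∈ U := ⟨⟨le_trans hxIcc.1 (le_of_lt hb0x), le_trans hb0u hu'.1.2⟩, hb0free⟩
    have hb0eq : b0 = u' := by
      rcases eq_or_lt_of_le hb0u with h | h
      · exact h
      · exact absurd hb0U (hgap b0 (lt_trans hux hb0x) h)
    -- choose approximating edges
    have hseq : ∀ n : ℕ, ∃ p, p ∈ C ∧ p.1 < u + 1/((n:ℝ)+1) ∧ u' - 1/((n:ℝ)+1) < p.2 := by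
      intro n
      have hpos : (0:ℝ) < 1/((n:ℝ)+1) := by positivity
      obtain ⟨p, hp, hp1⟩ := hexlt (u + 1/((n:ℝ)+1)) (by rw [ha0eq]; linarith)
      obtain ⟨q, hq, hq2⟩ := hexgt (u' - 1/((n:ℝ)+1)) (by rw [hb0eq]; linarith)
      rcases hchain p hp q hq with ⟨h1, h2⟩ | ⟨h1, h2⟩
      · exact ⟨q, hq, by linarith, by linarith⟩
      · exact ⟨p, hp, by linarith, by linarith⟩
    choose pf hpC hpf1 hpf2 using hseq
    have hdiv : Tendsto (fun n : ℕ => 1/((n:ℝ)+1)) atTop (nhds 0) :=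
      tendsto_one_div_add_atTop_nhds_zero_nat
    have hl1 : Tendsto (fun n => (pf n).1) atTop (nhds u) := by
      have hup : Tendsto (fun n : ℕ => u + 1/((n:ℝ)+1)) atTop (nhds u) := by
        simpa using hdiv.const_add u
      exact tendsto_of_tendsto_of_tendsto_of_le_of_le tendsto_const_nhds hup
        (fun n => hCl _ (hpC n)) (fun n => le_of_lt (hpf1 n))
    have hl2 : Tendsto (fun n => (pf n).2) atTop (nhds u') := by
      have hdown : Tendsto (fun n : ℕ => u' - 1/((n:ℝ)+1)) atTop (nhds u') := by
        simpa [sub_eq_add_neg] using (hdiv.const_mul (-1)).const_add u'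
      exact tendsto_of_tendsto_of_tendsto_of_le_of_le hdown tendsto_const_nhds
        (fun n => le_of_lt (hpf2 n)) (fun n => hCu _ (hpC n))
    have hcont : Continuous (fun r : ℝ => ((r : S1))) := AddCircle.continuous_mk' 1
    have htt : Tendsto (fun n => ((((pf n).1 : S1), ((pf n).2 : S1)) : S1 × S1)) atTop
        (nhds ((u : S1), (u' : S1))) :=
      ((hcont.tendsto u).comp hl1).prodMk_nhds ((hcont.tendsto u').comp hl2)
    have hmem : ∀ n, ((((pf n).1 : S1), ((pf n).2 : S1)) : S1 × S1) ∈
        {p : S1 × S1 | E1.r p.1 p.2} := fun n => ((hpC n).2.2.2.1).1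
    exact E1.closed.mem_of_tendsto htt (Filter.Eventually.of_forall hmem)
  -- chain through the finitely many free points
  have hrel12 : E1.r (t₁ : S1) (t₂ : S1) := by
    have key : ∀ n : ℕ, ∀ v, v ∈ U → (U ∩ Ico t₁ v).ncard ≤ n → E1.r (t₁ : S1) (v : S1) := by
      intro n
      induction n with
      | zero =>
        intro v hv hcard
        rcases eq_or_lt_of_le hv.1.1 with h | h
        · rw [← h]; exact E1.refl _
        · exfalso
          have hmem : t₁ ∈ U ∩ Ico t₁ v := ⟨ht1U, le_refl _, h⟩
          have hfin : (U ∩ Ico t₁ v).Finite := hUinf.subset inter_subset_left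
          have h0 : (U ∩ Ico t₁ v).ncard = 0 := Nat.le_zero.1 hcard
          rw [(Set.ncard_eq_zero hfin)] at h0
          rw [h0] at hmem
          exact hmem
      | succ n ih =>
        intro v hv hcard
        rcases eq_or_lt_of_le hv.1.1 with h | h
        · rw [← h]; exact E1.refl _
        · set W := U ∩ Ico t₁ v with hWdef
          have hWfin : W.Finite := hUinf.subset inter_subset_left
          have hWne : W.Nonempty := ⟨t₁, ht1U, le_refl _, h⟩
          have hsne : hWfin.toFinset.Nonempty := by
            rwa [Set.Finite.toFinset_nonempty]
          set w := hWfin.toFinset.max' hsne with hwdef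
          have hwW : w ∈ W := by
            have := hWfin.toFinset.max'_mem hsne
            rwa [Set.Finite.mem_toFinset] at this
          have hwmax : ∀ y ∈ W, y ≤ w := fun y hy =>
            hWfin.toFinset.le_max' y (hWfin.mem_toFinset.2 hy)
          have hwU : w ∈ U := hwW.1
          have hwv : w < v := hwW.2.2
          have hgap : ∀ s', w < s' → s' < v → s' ∉ U := by
            intro s' h1 h2 hs'
            have hmem : s' ∈ W := ⟨hs', le_trans hwW.2.1 (le_of_lt h1), h2⟩
            linarith [hwmax s' hmem]
          have hrwv : E1.r (w : S1) (v : S1) := hstep w v hwU hv hwv hgap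
          have hsub : U ∩ Ico t₁ w ⊆ W := inter_subset_inter_right _
            (Ico_subset_Ico_right (le_of_lt hwv))
          have hwnotin : w ∉ U ∩ Ico t₁ w := fun hc => lt_irrefl w hc.2.2
          have hss : U ∩ Ico t₁ w ⊂ W := ⟨hsub, fun hc => hwnotin (hc hwW)⟩
          have hlt' : (U ∩ Ico t₁ w).ncard < W.ncard := Set.ncard_lt_ncard hss hWfin
          have hle : (U ∩ Ico t₁ w).ncard ≤ n := by omega
          exact E1.trans (ih w hwU hle) hrwv
    exact key (U ∩ Ico t₁ t₂).ncard t₂ ht2U (le_refl _)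
  apply hnot1
  rw [ht1, ht2] at hrel12
  exact ⟨hrel12, hne, Or.inl (fun z hz => hside z (htune _ _ hz))⟩

end Lam19
namespace Lam19
open Complex Set Real Filter

lemma ee_per (t : ℝ) : ee (t + 1) = ee t := by
  rw [← toC_coe, ← toC_coe, coe_add_one]

set_option maxHeartbeats 2000000 in
lemma main {d : ℕ} {E1 E2 : LamEq d} (htune : ∀ x y, E1.r x y → E2.r x y)
    {p₁ p₂ : S1} (hr2 : E2.r p₁ p₂) (hne : p₁ ≠ p₂)
    (hside : ∀ z, E2.r p₁ z → ¬ StrictArc p₁ z p₂)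
    (hnot1 : ¬ E1.IsEdge p₁ p₂) :
    ∃ z ∈ Metric.ball (0 : ℂ) 1 \ leafUnion E1,
      segment ℝ (toC p₁) (toC p₂) ⊆
        closure (connectedComponentIn (Metric.ball (0 : ℂ) 1 \ leafUnion E1) z) ∧
      {w : S1 |
        toC w ∈ closure (connectedComponentIn (Metric.ball (0 : ℂ) 1 \ leafUnion E1) z)
        }.Infinite := by
  classical
  obtain ⟨t₁, ht1, -, -⟩ := exists_rep 0 p₁
  obtain ⟨t₂, ht2, h2a, hub⟩ := exists_rep t₁ p₂
  have hlt : t₁ < t₂ := by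
    rcases eq_or_lt_of_le h2a with h | h
    · exfalso; apply hne; rw [← ht1, ← ht2, h]
    · exact h
  have ha₁ : toC p₁ = ee t₁ := by rw [← ht1, toC_coe]
  have ha₂ : toC p₂ = ee t₂ := by rw [← ht2, toC_coe]
  have hee_ne : ee t₁ ≠ ee t₂ := by
    rw [← ha₁, ← ha₂]
    exact fun h => hne (toC_inj h)
  set z : ℂ := (1/2 : ℝ) • ee t₁ + (1/2 : ℝ) • ee t₂ with hzdef
  have hzseg : z ∈ openSegment ℝ (ee t₁) (ee t₂) :=
    ⟨1/2, 1/2, by norm_num, by norm_num, by norm_num, rfl⟩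
  have hzball : z ∈ Metric.ball (0 : ℂ) 1 := by
    have hsc := strictConvex_closedBall ℝ (0 : ℂ) 1
    have h1 : ee t₁ ∈ Metric.closedBall (0:ℂ) 1 := by rw [← ha₁]; exact toC_mem_closedBall p₁
    have h2 : ee t₂ ∈ Metric.closedBall (0:ℂ) 1 := by rw [← ha₂]; exact toC_mem_closedBall p₂
    have := hsc.openSegment_subset h1 h2 hee_ne hzseg
    rwa [interior_closedBall _ one_ne_zero] at this
  have hz_ne_ee : ∀ r : ℝ, z ≠ ee r := by
    intro r h
    rw [h] at hzball
    simp [Metric.mem_ball, Complex.dist_eq, abs_ee] at hzball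
  have hfz : sideFun (ee t₁) (ee t₂) z = 0 :=
    side_zero_on_segment (side_self_left _ _) (side_self_right _ _)
      (openSegment_subset_segment ℝ _ _ hzseg)
  -- the free directions
  set U' : Set ℝ := {s : ℝ | t₁ < s ∧ s < t₂ ∧ ∀ α β : ℝ, t₁ < α → α < β → β < t₂ →
      E1.IsEdge (α : S1) (β : S1) → ¬(α < s ∧ s < β)} with hU'def
  -- the connected set
  set Cset : Set (Set ℂ) := insert (openSegment ℝ (ee t₁) (ee t₂))
      ((fun u => (AffineMap.lineMap z (ee u) : ℝ →ᵃ[ℝ] ℂ) '' Ico (0:ℝ) 1) '' U') with hCsetdef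
  set T : Set ℂ := ⋃₀ Cset with hTdef
  have hT_cases : ∀ q ∈ T, q ∈ openSegment ℝ (ee t₁) (ee t₂) ∨
      ∃ u ∈ U', ∃ t : ℝ, 0 ≤ t ∧ t < 1 ∧ q = (1-t) • z + t • (ee u) := by
    rintro q ⟨S, hS, hqS⟩
    rcases mem_insert_iff.1 hS with rfl | ⟨u, hu, rfl⟩
    · exact Or.inl hqS
    · obtain ⟨t, ht, rfl⟩ := hqS
      exact Or.inr ⟨u, hu, t, ht.1, ht.2, AffineMap.lineMap_apply_module z (ee u) t⟩
  -- side values on T relative to the base chord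
  have hT_side : ∀ q ∈ T, sideFun (ee t₁) (ee t₂) q ≤ 0 := by
    intro q hq
    rcases hT_cases q hq with hmem | ⟨u, hu, t, ht0, ht1', rfl⟩
    · obtain ⟨sa, sb, hsa, hsb, hab, rfl⟩ := hmem
      rw [side_affine _ _ _ _ hab, side_self_left, side_self_right]
      simp
    · rw [side_affine _ _ _ _ (by ring : (1-t) + t = 1), hfz, mul_zero, zero_add]
      have hneg : sideFun (ee t₁) (ee t₂) (ee u) < 0 := side_ee_neg hu.1 hu.2.1 hub
      nlinarith
  -- membership of T in the ball
  have hTball : T ⊆ Metric.ball (0:ℂ) 1 := by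
    intro q hq
    rcases hT_cases q hq with hmem | ⟨u, hu, t, ht0, ht1', rfl⟩
    · have hsc := strictConvex_closedBall ℝ (0 : ℂ) 1
      have h1 : ee t₁ ∈ Metric.closedBall (0:ℂ) 1 := by rw [← ha₁]; exact toC_mem_closedBall p₁
      have h2 : ee t₂ ∈ Metric.closedBall (0:ℂ) 1 := by rw [← ha₂]; exact toC_mem_closedBall p₂
      have := hsc.openSegment_subset h1 h2 hee_ne hmem
      rwa [interior_closedBall _ one_ne_zero] at this
    · rcases eq_or_lt_of_le ht0 with h | h
      · rw [← h]; simpa using hzball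
      · have hmem : (1-t) • z + t • (ee u) ∈ openSegment ℝ z (ee u) :=
          ⟨1-t, t, by linarith, h, by ring, rfl⟩
        have hconv : Convex ℝ (Metric.closedBall (0:ℂ) 1) := convex_closedBall _ _
        have hint : z ∈ interior (Metric.closedBall (0:ℂ) 1) := by
          rwa [interior_closedBall _ one_ne_zero]
        have hcl : ee u ∈ closure (Metric.closedBall (0:ℂ) 1) := by
          rw [IsClosed.closure_eq Metric.isClosed_closedBall]
          have : ee u = toC ((u : ℝ) : S1) := (toC_coe u).symm
          rw [this]; exact toC_mem_closedBall _
        have := hconv.openSegment_interior_closure_subset_interior hint hcl hmem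
        rwa [interior_closedBall _ one_ne_zero] at this
  -- core: no leaf chord meets T
  have hcore : ∀ s s' : ℝ, t₁ ≤ s → s < s' → s' < t₁ + 1 → E1.IsEdge (s : S1) (s' : S1) →
      ∀ q ∈ segment ℝ (ee s) (ee s'), q ∉ T := by
    intro s s' hs0 hss hs'1 he q hqseg hqT
    rcases eq_or_lt_of_le hs0 with hseq | hs0lt
    · -- s = t₁
      subst hseq
      rcases lt_trichotomy s' t₂ with hc | hc | hc
      · -- other endpoint inside the empty arc: contradiction with hside
        refine hside ((s' : ℝ) : S1) ?_ ?_
        · have h1 : E1.r p₁ ((s':ℝ) : S1) := by rw [← ht1]; exact he.1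
          exact htune _ _ h1
        · rw [← ht1, ← ht2]; exact strictArc_of hss hc hub
      · -- the leaf is ℓ itself
        subst hc
        rw [ht1, ht2] at he
        exact hnot1 he
      · -- mixed case: one endpoint at p₁, other beyond p₂
        have hpos : 0 < sideFun (ee t₁) (ee t₂) (ee s') := side_ee_pos hlt hc hs'1
        have hq0 : sideFun (ee t₁) (ee t₂) q ≤ 0 := hT_side q hqT
        obtain ⟨sa, sb, hsa, hsb, hab, heq⟩ := mem_segment_side (a := ee t₁) (b := ee t₂) hqseg
        rw [side_self_left] at heq
        have hqge : 0 ≤ sideFun (ee t₁) (ee t₂) q := by rw [heq]; nlinarith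
        have hqz : sideFun (ee t₁) (ee t₂) q = 0 := le_antisymm hq0 hqge
        have hq_eq : q = ee t₁ := side_zero_endpoint (side_self_left _ _) (ne_of_gt hpos) hqseg hqz
        rcases hT_cases q hqT with hmem | ⟨u, hu, t, ht0, htl, hqe⟩
        · rw [hq_eq] at hmem
          exact hee_ne (left_mem_openSegment_iff.1 hmem)
        · have hneg : sideFun (ee t₁) (ee t₂) (ee u) < 0 := side_ee_neg hu.1 hu.2.1 hub
          have hqval : sideFun (ee t₁) (ee t₂) q = t * sideFun (ee t₁) (ee t₂) (ee u) := by
            rw [hqe, side_affine _ _ _ _ (by ring : (1-t)+t = 1), hfz]; ring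
          have ht00 : t = 0 := by nlinarith [hqz]
          rw [ht00] at hqe
          simp at hqe
          exact hz_ne_ee t₁ (by rw [← hqe, hq_eq])
    · -- t₁ < s
      rcases lt_trichotomy s t₂ with hst2 | hst2 | hst2
      · rcases lt_trichotomy s' t₂ with hc | hc | hc
        · -- both endpoints inside the arc: use the side function of the leaf
          have hg1 : 0 < sideFun (ee s) (ee s') (ee t₁) := by
            rw [← ee_per t₁]
            exact side_ee_pos hss (by linarith) (by linarith)
          have hg2 : 0 < sideFun (ee s) (ee s') (ee t₂) := side_ee_pos hss hc (by linarith)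
          have hgz : 0 < sideFun (ee s) (ee s') z := by
            rw [hzdef, side_affine _ _ _ _ (by norm_num : (1/2:ℝ)+1/2 = 1)]
            nlinarith
          have hgq : 0 < sideFun (ee s) (ee s') q := by
            rcases hT_cases q hqT with hmem | ⟨u, hu, t, ht0, htl, hqe⟩
            · obtain ⟨sa, sb, hsa', hsb', hab, rfl⟩ := hmem
              rw [side_affine _ _ _ _ hab]
              nlinarith
            · have hfree : ¬(s < u ∧ u < s') := hu.2.2 s s' hs0lt hss hc he
              have hgu : 0 ≤ sideFun (ee s) (ee s') (ee u) := by
                rcases le_or_gt u s with h | h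
                · rcases eq_or_lt_of_le h with h' | h'
                  · rw [h', side_self_left]
                  · rw [← ee_per u]
                    exact le_of_lt (side_ee_pos hss (by linarith [hu.1]) (by linarith))
                · have h' : s' ≤ u := by
                    by_contra hx
                    push_neg at hx
                    exact hfree ⟨h, hx⟩
                  rcases eq_or_lt_of_le h' with h'' | h''
                  · rw [← h'', side_self_right]
                  · exact le_of_lt (side_ee_pos hss h'' (by linarith [hu.2.1]))
              rw [hqe, side_affine _ _ _ _ (by ring : (1-t)+t = 1)]
              nlinarith
          have hqz : sideFun (ee s) (ee s') q = 0 :=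
            side_zero_on_segment (side_self_left _ _) (side_self_right _ _) hqseg
          linarith
        · -- endpoint at p₂, other inside arc: contradiction with hside
          subst hc
          refine hside ((s : ℝ) : S1) ?_ ?_
          · have h1 : E2.r ((s:ℝ) : S1) p₂ := by
              have := htune _ _ he.1
              rwa [ht2] at this
            exact E2.trans hr2 (E2.symm h1)
          · rw [← ht1, ← ht2]; exact strictArc_of hs0lt hst2 hub
        · -- linked with ℓ: impossible
          have hlink : Linked (p₁, p₂) (((s:ℝ) : S1), ((s':ℝ) : S1)) := by
            rw [← ht1, ← ht2]
            exact linked_of_interleaved hs0lt hst2 hc hs'1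
          by_cases hrel : E2.r p₁ ((s:ℝ) : S1)
          · exact hside _ hrel (by rw [← ht1, ← ht2]; exact strictArc_of hs0lt hst2 hub)
          · exact E2.unlinked p₁ p₂ _ _ hr2 (htune _ _ he.1) hrel hlink
      · -- s = t₂ : mixed case with zero at p₂
        have hes : ee s = ee t₂ := by rw [hst2]
        rw [hes] at hqseg
        have hss' : t₂ < s' := by rw [← hst2]; exact hss
        have hpos : 0 < sideFun (ee t₁) (ee t₂) (ee s') := side_ee_pos hlt hss' hs'1
        have hq0 : sideFun (ee t₁) (ee t₂) q ≤ 0 := hT_side q hqT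
        obtain ⟨sa, sb, hsa, hsb, hab, heq⟩ := mem_segment_side (a := ee t₁) (b := ee t₂) hqseg
        rw [side_self_right] at heq
        have hqge : 0 ≤ sideFun (ee t₁) (ee t₂) q := by rw [heq]; nlinarith
        have hqz : sideFun (ee t₁) (ee t₂) q = 0 := le_antisymm hq0 hqge
        have hq_eq : q = ee t₂ := side_zero_endpoint (side_self_right _ _) (ne_of_gt hpos) hqseg hqz
        rcases hT_cases q hqT with hmem | ⟨u, hu, t, ht0, htl, hqe⟩
        · rw [hq_eq] at hmem
          exact hee_ne (right_mem_openSegment_iff.1 hmem)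
        · have hneg : sideFun (ee t₁) (ee t₂) (ee u) < 0 := side_ee_neg hu.1 hu.2.1 hub
          have hqval : sideFun (ee t₁) (ee t₂) q = t * sideFun (ee t₁) (ee t₂) (ee u) := by
            rw [hqe, side_affine _ _ _ _ (by ring : (1-t)+t = 1), hfz]; ring
          have ht00 : t = 0 := by nlinarith [hqz]
          rw [ht00] at hqe
          simp at hqe
          exact hz_ne_ee t₂ (by rw [← hqe, hq_eq])
      · -- both endpoints beyond p₂
        have hps : 0 < sideFun (ee t₁) (ee t₂) (ee s) := side_ee_pos hlt hst2 (by linarith)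
        have hps' : 0 < sideFun (ee t₁) (ee t₂) (ee s') := side_ee_pos hlt (by linarith) hs'1
        have := side_pos_on_segment hps hps' hqseg
        linarith [hT_side q hqT]
  -- T misses all leaves
  have hdisjoint : ∀ q ∈ T, q ∉ leafUnion E1 := by
    intro q hqT hleaf
    rw [leafUnion] at hleaf
    simp only [mem_iUnion, mem_setOf_eq] at hleaf
    obtain ⟨p, hp, hqp⟩ := hleaf
    obtain ⟨s, hs, hsa, hsb⟩ := exists_rep t₁ p.1
    obtain ⟨s', hs', hsa', hsb'⟩ := exists_rep t₁ p.2
    have hedge : E1.IsEdge ((s:ℝ) : S1) ((s':ℝ) : S1) := by rwa [hs, hs']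
    have hqseg : q ∈ segment ℝ (ee s) (ee s') := by
      rw [chordSeg] at hqp
      rwa [← hs, ← hs', toC_coe, toC_coe] at hqp
    rcases lt_trichotomy s s' with h | h | h
    · exact hcore s s' hsa h hsb' hedge q hqseg hqT
    · exact hedge.2.1 (by rw [h])
    · exact hcore s' s hsa' h hsb (isEdge_symm hedge) q (by rwa [segment_symm]) hqT
  set D : Set ℂ := Metric.ball (0:ℂ) 1 \ leafUnion E1 with hDdef
  have hTD : T ⊆ D := fun q hq => ⟨hTball hq, hdisjoint q hq⟩
  have hzT : z ∈ T := ⟨openSegment ℝ (ee t₁) (ee t₂), mem_insert _ _, hzseg⟩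
  have hTpre : IsPreconnected T := by
    apply isPreconnected_sUnion z
    · rintro S hS
      rcases mem_insert_iff.1 hS with rfl | ⟨u, hu, rfl⟩
      · exact hzseg
      · exact ⟨0, ⟨le_refl _, zero_lt_one⟩, AffineMap.lineMap_apply_zero z (ee u)⟩
    · rintro S hS
      rcases mem_insert_iff.1 hS with rfl | ⟨u, hu, rfl⟩
      · exact (convex_openSegment (𝕜 := ℝ) (ee t₁) (ee t₂)).isPreconnected
      · exact ((convex_Ico (0:ℝ) 1).affine_image (AffineMap.lineMap z (ee u))).isPreconnected
  have hsub : T ⊆ connectedComponentIn D z := hTpre.subset_connectedComponentIn hzT hTD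
  refine ⟨z, hTD hzT, ?_, ?_⟩
  · rw [ha₁, ha₂, ← closure_openSegment]
    exact closure_mono (fun q hq => hsub ⟨_, mem_insert _ _, hq⟩)
  · have hUinf := freeSet_infinite htune hne hside hnot1 ht1 ht2 hlt hub
    have hU'inf : U'.Infinite := by
      apply Set.Infinite.mono ?_ (hUinf.diff (Set.toFinite ({t₁, t₂} : Set ℝ)))
      rintro x ⟨⟨⟨hx1, hx2⟩, hxfree⟩, hxne⟩
      simp only [mem_insert_iff, mem_singleton_iff, not_or] at hxne
      exact ⟨lt_of_le_of_ne hx1 (Ne.symm hxne.1), lt_of_le_of_ne hx2 hxne.2, hxfree⟩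
    have hinj : InjOn (fun s : ℝ => ((s : ℝ) : S1)) U' := by
      intro a ha b hb h
      obtain ⟨n, hn⟩ := s1_coe_eq_iff.1 h
      have hn0 : n = 0 := by
        apply int_eq_zero_of_abs_lt
        · have : a - b < 1 := by linarith [ha.1, ha.2.1, hb.1, hb.2.1, hub]
          linarith [hn]
        · have : -1 < a - b := by linarith [ha.1, ha.2.1, hb.1, hb.2.1, hub]
          linarith [hn]
      rw [hn0] at hn
      push_cast at hn
      linarith
    apply Set.Infinite.mono ?_ (hU'inf.image hinj)
    rintro w ⟨u, hu, rfl⟩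
    show toC ((u : ℝ) : S1) ∈ closure (connectedComponentIn D z)
    rw [toC_coe]
    have h1 : ee u ∈ (AffineMap.lineMap z (ee u) : ℝ →ᵃ[ℝ] ℂ) '' Icc (0:ℝ) 1 :=
      ⟨1, ⟨zero_le_one, le_refl _⟩, AffineMap.lineMap_apply_one z (ee u)⟩
    have h2 : (AffineMap.lineMap z (ee u) : ℝ →ᵃ[ℝ] ℂ) '' Icc (0:ℝ) 1 ⊆
        closure ((AffineMap.lineMap z (ee u) : ℝ →ᵃ[ℝ] ℂ) '' Ico (0:ℝ) 1) := by
      rw [← closure_Ico (zero_ne_one)]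
      exact image_closure_subset_closure_image AffineMap.lineMap_continuous
    have h3 : ((AffineMap.lineMap z (ee u) : ℝ →ᵃ[ℝ] ℂ) '' Ico (0:ℝ) 1) ⊆
        connectedComponentIn D z := by
      intro q hq
      apply hsub
      exact ⟨_, mem_insert_of_mem _ ⟨u, hu, rfl⟩, hq⟩
    exact closure_mono h3 (h2 h1)

end Lam19

/-- Suppose the q-lamination `Λ₂` of `E₂` tunes the q-lamination `Λ₁` of `E₁`
(every `E₁`-class is contained in an `E₂`-class).  If `ℓ` is a leaf of `Λ₂` which is not a
leaf of `Λ₁` and not a limit of leaves of `Λ₁`, then `ℓ` is contained in the closure of an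
infinite gap of `Λ₁`: the closure of some connected component of the open disk minus the
union of the leaves of `Λ₁` contains the segment `ℓ` and meets the circle in infinitely
many points. -/
theorem tuned_leaf_in_infinite_gap (d : ℕ) (hd : 2 ≤ d) (E1 E2 : LamEq d)
    (htune : ∀ x y, E1.r x y → E2.r x y)
    (ℓ : S1 × S1) (hleaf2 : E2.IsEdge ℓ.1 ℓ.2)
    (hnot1 : ¬ E1.IsEdge ℓ.1 ℓ.2)
    (hnotlim : ℓ ∉ closure {p : S1 × S1 | E1.IsEdge p.1 p.2}) :
    ∃ z ∈ Metric.ball (0 : ℂ) 1 \ leafUnion E1,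
      chordSeg ℓ ⊆
        closure (connectedComponentIn (Metric.ball (0 : ℂ) 1 \ leafUnion E1) z) ∧
      {w : S1 |
        toC w ∈ closure (connectedComponentIn (Metric.ball (0 : ℂ) 1 \ leafUnion E1) z)
        }.Infinite := by
  obtain ⟨hr2, hne, hdisj⟩ := hleaf2
  rcases hdisj with hside | hside
  · exact Lam19.main htune hr2 hne hside hnot1
  · have hside' : ∀ z, E2.r ℓ.2 z → ¬ StrictArc ℓ.2 z ℓ.1 :=
      fun z hz => hside z (E2.trans hr2 hz)
    have hnot1' : ¬ E1.IsEdge ℓ.2 ℓ.1 := fun h => hnot1 (Lam19.isEdge_symm h)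
    obtain ⟨z, hz, h1, h2⟩ := Lam19.main htune (E2.symm hr2) hne.symm hside' hnot1'
    refine ⟨z, hz, ?_, h2⟩
    rw [chordSeg, segment_symm]
    exact h1
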